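/- Let A, B, C ∈ ℂ with C ≠ 0 and |A| < |C|. Then for every ζ ∈ ℂ, the function g(z) = exp(−Az²/(2C) − (B−ζ)z/C) lies in the Fock space F²(ℂ) and satisfies (Az + B) g(z) + C g'(z) = ζ g(z) for all z; consequently the point spectrum of the maximal operator f ↦ (Az+B)f + Cf' on F²(ℂ) is all of ℂ. -/

import Mathlib

open MeasureTheory Complex Finset

noncomputable def fockNorm (f : ℂ → ℂ) : ℝ :=
  Real.sqrt ((1 / Real.pi) * ∫ z : ℂ, ‖f z‖ ^ 2 * Real.exp (-‖z‖ ^ 2))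

def MemFock (f : ℂ → ℂ) : Prop :=
  Differentiable ℂ f ∧
    MeasureTheory.Integrable (fun z : ℂ => ‖f z‖ ^ 2 * Real.exp (-‖z‖ ^ 2))

lemma gauss_int {ε : ℝ} (hε : 0 < ε) :
    MeasureTheory.Integrable (fun z : ℂ => Real.exp (-ε * ‖z‖ ^ 2)) := by
  have h := GaussianFourier.integrable_cexp_neg_mul_sq_norm_add (V := ℂ) (b := (ε : ℂ))
    (by simpa using hε) 0 (0 : ℂ)
  have h2 := h.norm
  simpa [Complex.norm_exp, ← Complex.ofReal_pow] using h2

lemma memFock_exp (a b : ℂ) (ha : 2 * ‖a‖ < 1) :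
    MemFock (fun z : ℂ => Complex.exp (a * z ^ 2 + b * z)) := by
  constructor
  · exact (((differentiable_id.pow 2).const_mul a).add
      (differentiable_id.const_mul b)).cexp
  · set r : ℝ := 2 * ‖a‖ with hr
    set ε : ℝ := (1 - r) / 2 with hε
    have hε0 : 0 < ε := by simp only [hε]; linarith
    have hK : MeasureTheory.Integrable
        (fun z : ℂ => Real.exp ((‖b‖) ^ 2 / ε) * Real.exp (-ε * ‖z‖ ^ 2)) :=
      (gauss_int hε0).const_mul _
    refine hK.mono' ?_ ?_
    · apply Continuous.aestronglyMeasurable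
      continuity
    · filter_upwards with z
      have h1 : ‖Complex.exp (a * z ^ 2 + b * z)‖ ^ 2 * Real.exp (-‖z‖ ^ 2)
          = Real.exp (2 * (a * z ^ 2 + b * z).re - ‖z‖ ^ 2) := by
        rw [Complex.norm_exp, ← Real.exp_nat_mul, ← Real.exp_add]
        push_cast
        ring
      have h2 : (a * z ^ 2 + b * z).re ≤ ‖a‖ * ‖z‖ ^ 2 + ‖b‖ * ‖z‖ := by
        calc (a * z ^ 2 + b * z).re ≤ ‖a * z ^ 2 + b * z‖ := Complex.re_le_norm _
          _ ≤ ‖a * z ^ 2‖ + ‖b * z‖ := norm_add_le _ _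
          _ = ‖a‖ * ‖z‖ ^ 2 + ‖b‖ * ‖z‖ := by
              simp [norm_mul, norm_pow]
      have h3 : 2 * ‖b‖ * ‖z‖ ≤ ε * ‖z‖ ^ 2 + (‖b‖) ^ 2 / ε := by
        have hKdef : (‖b‖) ^ 2 / ε * ε = (‖b‖) ^ 2 :=
          div_mul_cancel₀ _ hε0.ne'
        nlinarith [sq_nonneg (ε * ‖z‖ - ‖b‖), hε0, hKdef,
          sq_nonneg (‖z‖ : ℝ), norm_nonneg z]
      have h4 : 2 * (a * z ^ 2 + b * z).re - ‖z‖ ^ 2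
          ≤ (‖b‖) ^ 2 / ε + (-ε * ‖z‖ ^ 2) := by
        nlinarith [h2, h3, sq_nonneg (‖z‖ : ℝ)]
      rw [h1]
      have hnn : (0:ℝ) ≤ Real.exp (2 * (a * z ^ 2 + b * z).re - ‖z‖ ^ 2) := (Real.exp_pos _).le
      rw [Real.norm_of_nonneg hnn, ← Real.exp_add]
      exact Real.exp_le_exp.mpr h4

theorem point_spectrum_all_of_C (A B C : ℂ) (hC : C ≠ 0) (hAC : ‖A‖ < ‖C‖) :
    (∀ ζ : ℂ,
      MemFock (fun z : ℂ => Complex.exp (-(A * z ^ 2) / (2 * C) - (B - ζ) / C * z)) ∧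
      ∀ z : ℂ,
        (A * z + B) * Complex.exp (-(A * z ^ 2) / (2 * C) - (B - ζ) / C * z) +
          C * deriv (fun w : ℂ => Complex.exp (-(A * w ^ 2) / (2 * C) - (B - ζ) / C * w)) z =
        ζ * Complex.exp (-(A * z ^ 2) / (2 * C) - (B - ζ) / C * z)) ∧
    {ζ : ℂ | ∃ f : ℂ → ℂ, MemFock f ∧
        MemFock (fun z => (A * z + B) * f z + C * deriv f z) ∧ f ≠ 0 ∧
        ∀ z : ℂ, (A * z + B) * f z + C * deriv f z = ζ * f z} = Set.univ := by
  have hC0 : ‖C‖ ≠ 0 := by simpa using hC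
  have key : ∀ ζ : ℂ,
      MemFock (fun z : ℂ => Complex.exp (-(A * z ^ 2) / (2 * C) - (B - ζ) / C * z)) ∧
      ∀ z : ℂ,
        (A * z + B) * Complex.exp (-(A * z ^ 2) / (2 * C) - (B - ζ) / C * z) +
          C * deriv (fun w : ℂ => Complex.exp (-(A * w ^ 2) / (2 * C) - (B - ζ) / C * w)) z =
        ζ * Complex.exp (-(A * z ^ 2) / (2 * C) - (B - ζ) / C * z) := by
    intro ζ
    have hfun : (fun z : ℂ => Complex.exp (-(A * z ^ 2) / (2 * C) - (B - ζ) / C * z))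
        = (fun z : ℂ => Complex.exp ((-A / (2 * C)) * z ^ 2 + (-(B - ζ) / C) * z)) := by
      funext z; congr 1; ring
    have hCpos : 0 < ‖C‖ := norm_pos_iff.mpr hC
    have ha : 2 * ‖-A / (2 * C)‖ < 1 := by
      rw [norm_div, norm_neg, norm_mul, Complex.norm_two]
      have h' : 2 * (‖A‖ / (2 * ‖C‖)) = ‖A‖ / ‖C‖ := by
        field_simp
      rw [h', div_lt_one hCpos]
      exact hAC
    have hmem : MemFock (fun z : ℂ => Complex.exp (-(A * z ^ 2) / (2 * C) - (B - ζ) / C * z)) := by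
      rw [hfun]; exact memFock_exp _ _ ha
    refine ⟨hmem, fun z => ?_⟩
    have hu : HasDerivAt (fun w : ℂ => -(A * w ^ 2) / (2 * C) - (B - ζ) / C * w)
        (-(A * (2 * z)) / (2 * C) - (B - ζ) / C * 1) z := by
      have h1 : HasDerivAt (fun w : ℂ => w ^ 2) (2 * z) z := by
        simpa using hasDerivAt_pow 2 z
      exact (((h1.const_mul A).neg.div_const (2 * C)).sub
        ((hasDerivAt_id z).const_mul ((B - ζ) / C)))
    have hd := hu.cexp
    rw [hd.deriv]
    field_simp
    ring
  refine ⟨key, ?_⟩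
  ext ζ
  simp only [Set.mem_setOf_eq, Set.mem_univ, iff_true]
  obtain ⟨hmem, heq⟩ := key ζ
  refine ⟨_, hmem, ?_, ?_, heq⟩
  · have : (fun z : ℂ => (A * z + B) * Complex.exp (-(A * z ^ 2) / (2 * C) - (B - ζ) / C * z) +
        C * deriv (fun w : ℂ => Complex.exp (-(A * w ^ 2) / (2 * C) - (B - ζ) / C * w)) z)
        = fun z : ℂ => ζ * Complex.exp (-(A * z ^ 2) / (2 * C) - (B - ζ) / C * z) := funext heq
    rw [this]
    refine ⟨hmem.1.const_mul ζ, ?_⟩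
    have h2 := hmem.2.const_mul (‖ζ‖ ^ 2)
    refine h2.congr (Filter.Eventually.of_forall fun z => ?_)
    simp only [norm_mul, mul_pow]
    ring
  · intro h
    exact Complex.exp_ne_zero _ (congrFun h 0)
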